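/- Let X be a Banach space, φ : X → ℝ∪{+∞} a proper lower semicontinuous function, S_φ := {x ∈ X : φ(x) ≤ 0}, and x̄ ∈ S_φ. Suppose the boundary of S_φ is contained in φ⁻¹(0), φ has the epigraphical Shapiro first order contact property at x̄, and there exists r₀ > 0 such that S_φ has the Shapiro first order contact property at every point of S_φ ∩ B(x̄, r₀). If the inequality φ(x) ≤ 0 has a local error bound at x̄ with constant τ > 0, then there exists δ > 0 such that for every x ∈ bd(S_φ) ∩ B(x̄, δ) the inequality φ'_H(x; ·) ≤ 0 has a global error bound with the same constant τ, i.e., d(h, S_{φ'_H(x,·)}) ≤ τ·max{φ'_H(x; h), 0} for all h ∈ X, where S_{φ'_H(x,·)} := {u ∈ X : φ'_H(x; u) ≤ 0}. -/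

import Mathlib

open Filter Metric Set Pointwise Topology
open scoped ENNReal

noncomputable section

/-- The Bouligand (contingent) tangent cone of `A` at `u`. -/
def bouligand {X : Type*} [NormedAddCommGroup X] [NormedSpace ℝ X] (A : Set X) (u : X) :
    Set X :=
  {v | ∃ (vs : ℕ → X) (ts : ℕ → ℝ),
    Tendsto vs atTop (𝓝 v) ∧ Tendsto ts atTop (𝓝 0) ∧ (∀ n, 0 < ts n) ∧
    ∀ n, u + ts n • vs n ∈ A}

/-- The Shapiro first order contact property of `A` at `a`. -/
def shapiro {X : Type*} [NormedAddCommGroup X] [NormedSpace ℝ X] (A : Set X) (a : X) : Prop :=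
  ∀ ε > 0, ∃ δ > 0, ∀ x ∈ A ∩ ball a δ, ∀ u ∈ A ∩ ball a δ,
    infDist (x - u) (bouligand A u) ≤ ε * ‖x - u‖

/-- The lower Hadamard directional derivative of `φ` at `x` in direction `h`. -/
def hadamardDeriv {X : Type*} [NormedAddCommGroup X] [NormedSpace ℝ X]
    (φ : X → EReal) (x h : X) : EReal :=
  liminf (fun p : ℝ × X => (((1 : ℝ) / p.1 : ℝ) : EReal) * (φ (x + p.1 • p.2) - φ x))
    ((𝓝[>] (0 : ℝ)) ×ˢ 𝓝 h)

/-- The epigraph of an `EReal`-valued function, as a subset of `X × ℝ`. -/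
def epigraph {X : Type*} (φ : X → EReal) : Set (X × ℝ) := {p | φ p.1 ≤ (p.2 : EReal)}

/-- The Hausdorff-Pompeiu excess of `C` beyond `D`. -/
def excess {X : Type*} [PseudoEMetricSpace X] (C D : Set X) : ℝ≥0∞ :=
  ⨆ c ∈ C, EMetric.infEdist c D

/-- Metric regularity of `φ` around `xbar` (for `φ xbar`). -/
def metReg {X Y : Type*} [NormedAddCommGroup X] [NormedAddCommGroup Y]
    (φ : X → Y) (xbar : X) : Prop :=
  ∃ κ > (0 : ℝ), ∃ U ∈ 𝓝 xbar, ∃ V ∈ 𝓝 (φ xbar), ∀ x ∈ U, ∀ y ∈ V,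
    EMetric.infEdist x (φ ⁻¹' {y}) ≤ ENNReal.ofReal (κ * ‖φ x - y‖)
lemma zero_mem_bouligand {X : Type*} [NormedAddCommGroup X] [NormedSpace ℝ X]
    {A : Set X} {x : X} (hx : x ∈ A) : (0 : X) ∈ bouligand A x := by
  refine ⟨fun _ => 0, fun n => 1 / (n + 1), tendsto_const_nhds,
    tendsto_one_div_add_atTop_nhds_zero_nat, fun n => by positivity, fun n => by simpa using hx⟩

lemma smul_mem_bouligand {X : Type*} [NormedAddCommGroup X] [NormedSpace ℝ X]
    {A : Set X} {x : X} {v : X} {c : ℝ} (hc : 0 < c) (hv : v ∈ bouligand A x) :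
    c • v ∈ bouligand A x := by
  obtain ⟨vs, ts, hvs, hts, htsp, hmem⟩ := hv
  refine ⟨fun n => c • vs n, fun n => ts n / c, hvs.const_smul c, by simpa using hts.div_const c,
    fun n => div_pos (htsp n) hc, fun n => ?_⟩
  have : (ts n / c) • c • vs n = ts n • vs n := by
    rw [smul_smul, div_mul_cancel₀ _ hc.ne']
  rw [this]; exact hmem n

lemma bouligand_subset_deriv_nonpos {X : Type*} [NormedAddCommGroup X] [NormedSpace ℝ X]
    {φ : X → EReal} {S : Set X} (hS : S = {x | φ x ≤ 0}) {x : X} (hx0 : φ x = 0)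
    {v : X} (hv : v ∈ bouligand S x) : hadamardDeriv φ x v ≤ 0 := by
  obtain ⟨vs, ts, hvs, hts, htsp, hmem⟩ := hv
  have htend : Tendsto (fun n => (ts n, vs n)) atTop ((𝓝[>] (0:ℝ)) ×ˢ 𝓝 v) := by
    refine Tendsto.prodMk ?_ hvs
    exact tendsto_nhdsWithin_of_tendsto_nhds_of_eventually_within _ hts
      (Eventually.of_forall htsp)
  calc hadamardDeriv φ x v
      ≤ liminf (fun n => (((1:ℝ) / ts n : ℝ) : EReal) * (φ (x + ts n • vs n) - φ x)) atTop := by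
        exact liminf_le_liminf_of_le htend
    _ ≤ liminf (fun _ : ℕ => (0 : EReal)) atTop := by
        refine liminf_le_liminf (Eventually.of_forall fun n => ?_)
        have hφn : φ (x + ts n • vs n) ≤ 0 := by have := hmem n; rwa [hS] at this
        have hne : φ (x + ts n • vs n) ≠ ⊤ := (hφn.trans_lt (by norm_num)).ne
        have h1 : φ (x + ts n • vs n) - φ x = φ (x + ts n • vs n) := by
          rw [hx0, sub_zero]
        rw [h1]
        set a := φ (x + ts n • vs n) with ha
        have hpos : (0:ℝ) < 1 / ts n := one_div_pos.2 (htsp n)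
        by_cases hb : a = ⊥
        · rw [hb, EReal.coe_mul_bot_of_pos hpos]; exact bot_le
        · have hcoe : ((a.toReal : ℝ) : EReal) = a := EReal.coe_toReal hne hb
          rw [← hcoe, ← EReal.coe_mul]
          have hr : a.toReal ≤ 0 := by
            have := hφn; rw [← hcoe] at this; exact_mod_cast this
          exact_mod_cast mul_nonpos_iff.2 (Or.inl ⟨hpos.le, hr⟩)
    _ = 0 := liminf_const 0

set_option maxHeartbeats 1000000 in
theorem global_error_bound_of_derivative_of_local_error_bound {X : Type*}
    [NormedAddCommGroup X] [NormedSpace ℝ X] [CompleteSpace X]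
    (φ : X → EReal) (hlsc : LowerSemicontinuous φ) (hbot : ∀ x, φ x ≠ ⊥)
    (hproper : ∃ x, φ x ≠ ⊤)
    (S : Set X) (hS : S = {x | φ x ≤ 0}) (xbar : X) (hxbar : xbar ∈ S)
    (hbd : frontier S ⊆ {x | φ x = 0})
    (hepishap : shapiro (epigraph φ) (xbar, (φ xbar).toReal))
    (r₀ : ℝ) (hr₀ : 0 < r₀) (hshap : ∀ z ∈ S ∩ ball xbar r₀, shapiro S z)
    (τ : ℝ) (hτ : 0 < τ)
    (heb : ∃ δ > (0 : ℝ), ∀ x ∈ ball xbar δ,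
      ((infDist x S : ℝ) : EReal) ≤ (τ : EReal) * max (φ x) 0) :
    ∃ δ > (0 : ℝ), ∀ x ∈ frontier S ∩ ball xbar δ, ∀ h : X,
      ((EMetric.infEdist h {u | hadamardDeriv φ x u ≤ 0} : ℝ≥0∞) : EReal) ≤
        (τ : EReal) * max (hadamardDeriv φ x h) 0 := by
  obtain ⟨δ₁, hδ₁, heb⟩ := heb
  have hSclosed : IsClosed S := by
    rw [hS]
    exact hlsc.isClosed_preimage 0
  set δ := min δ₁ r₀ / 2 with hδdef
  clear_value δ
  have hδpos : 0 < δ := by rw [hδdef]; exact div_pos (lt_min hδ₁ hr₀) two_pos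
  refine ⟨δ, hδpos, fun x hx h => ?_⟩
  obtain ⟨hxfr, hxball⟩ := hx
  have hxS : x ∈ S := hSclosed.frontier_subset hxfr
  have hx0 : φ x = 0 := hbd hxfr
  set S' := {u | hadamardDeriv φ x u ≤ 0} with hS'def
  set D := hadamardDeriv φ x h with hDdef
  by_cases hD0 : D ≤ 0
  · have hmem : h ∈ S' := hD0
    have h0 : EMetric.infEdist h S' = 0 := EMetric.infEdist_zero_of_mem hmem
    rw [h0, max_eq_right hD0]
    simp
  push_neg at hD0
  by_cases hDtop : D = ⊤
  · rw [hDtop]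
    rw [max_eq_left le_top, EReal.coe_mul_top_of_pos hτ]
    exact le_top
  have hDbot : D ≠ ⊥ := fun hb => by simp [hb] at hD0
  set d := D.toReal with hd
  clear_value d
  have hdcoe : ((d : ℝ) : EReal) = D := by rw [hd]; exact EReal.coe_toReal hDtop hDbot
  have hdpos : 0 < d := by
    have : (0 : EReal) < (d : EReal) := hdcoe ▸ hD0
    exact_mod_cast this
  -- constants
  set B := ‖h‖ + 1 with hB
  clear_value B
  have hBpos : 0 < B := by rw [hB]; positivity
  set M := τ * (d + 1) + 1 + B with hM
  clear_value M
  have hMpos : 0 < M := by rw [hM]; nlinarith [hτ, hdpos, hBpos]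
  set C := τ + 3 + M with hC
  clear_value C
  have hCpos : 0 < C := by rw [hC]; linarith [hτ, hMpos]
  -- Shapiro at x
  have hxr₀ : x ∈ ball xbar r₀ := by
    rw [mem_ball] at hxball ⊢
    calc dist x xbar < δ := hxball
      _ ≤ r₀ / 2 := by rw [hδdef]; linarith [min_le_right δ₁ r₀]
      _ < r₀ := by linarith
  -- main approximation claim
  have main : ∀ ε : ℝ, 0 < ε → ε ≤ 1 → ∃ u ∈ S', dist h u ≤ τ * d + ε * C := by
    intro ε hε hε1
    obtain ⟨δ₂, hδ₂, hsh⟩ := hshap x ⟨hxS, hxr₀⟩ ε hε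
    set t₀ := min (δ / B) (min (r₀ / (2 * M)) (δ₂ / M)) with ht₀def
    clear_value t₀
    have ht₀ : 0 < t₀ := by
      rw [ht₀def]
      exact lt_min (div_pos hδpos hBpos)
        (lt_min (div_pos hr₀ (by linarith)) (div_pos hδ₂ hMpos))
    -- find a good point (t, h')
    have hlt : liminf (fun p : ℝ × X => (((1 : ℝ) / p.1 : ℝ) : EReal) * (φ (x + p.1 • p.2) - φ x))
        ((𝓝[>] (0 : ℝ)) ×ˢ 𝓝 h) < ((d + ε : ℝ) : EReal) := by
      have : D < ((d + ε : ℝ) : EReal) := by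
        rw [← hdcoe]; exact_mod_cast (by linarith : d < d + ε)
      exact this
    have hfreq := frequently_lt_of_liminf_lt (by isBoundedDefault) hlt
    have hG : (Ioo (0:ℝ) t₀) ×ˢ (ball h ε) ∈ (𝓝[>] (0 : ℝ)) ×ˢ 𝓝 h :=
      prod_mem_prod (Ioo_mem_nhdsGT_of_mem ⟨le_refl 0, ht₀⟩) (ball_mem_nhds _ hε)
    obtain ⟨⟨t, h'⟩, hflt, hGmem⟩ :=
      (hfreq.and_eventually (eventually_mem_set.2 hG)).exists
    obtain ⟨⟨ht, htt₀⟩, hh'⟩ := hGmem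
    have hh' : dist h' h < ε := mem_ball.1 hh'
    set y := x + t • h' with hy
    -- bound ‖h'‖
    have hh'norm : ‖h'‖ < B := by
      calc ‖h'‖ ≤ ‖h‖ + ‖h' - h‖ := by
            have := norm_sub_norm_le h' h; linarith [norm_sub_rev h' h ▸ this]
        _ < ‖h‖ + ε := by rw [← dist_eq_norm] at *; linarith [hh']
        _ ≤ B := by rw [hB]; linarith
    -- φ y is a real < t (d+ε)
    have hflt' : (((1 : ℝ) / t : ℝ) : EReal) * (φ y) < ((d + ε : ℝ) : EReal) := by
      have := hflt
      simp only [hx0, sub_zero] at this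
      exact this
    have htinv : (0:ℝ) < 1 / t := one_div_pos.2 ht
    have hytop : φ y ≠ ⊤ := by
      intro htop
      rw [htop, EReal.coe_mul_top_of_pos htinv] at hflt'
      exact (not_top_lt hflt')
    set r := (φ y).toReal with hr
    clear_value r
    have hycoe : ((r : ℝ) : EReal) = φ y := by rw [hr]; exact EReal.coe_toReal hytop (hbot y)
    have hrlt : (1 / t) * r < d + ε := by
      rw [← hycoe, ← EReal.coe_mul] at hflt'
      exact_mod_cast hflt'
    have hrlt' : r < t * (d + ε) := by
      have h1 : t * ((1 / t) * r) = r := by field_simp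
      nlinarith [hrlt, ht]
    -- error bound at y
    have hyball : y ∈ ball xbar δ₁ := by
      rw [mem_ball]
      have hd1 : dist y x = t * ‖h'‖ := by
        rw [hy, dist_eq_norm, add_sub_cancel_left, norm_smul, Real.norm_eq_abs,
          abs_of_pos ht]
      have htB : t * B < δ := by
        have : t < δ / B := lt_of_lt_of_le htt₀ (by rw [ht₀def]; exact min_le_left _ _)
        calc t * B < (δ / B) * B := by nlinarith
          _ = δ := by field_simp
      calc dist y xbar ≤ dist y x + dist x xbar := dist_triangle _ _ _
        _ < t * B + δ := by
            have : dist y x < t * B := by rw [hd1]; nlinarith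
            have := mem_ball.1 hxball; linarith
        _ < δ + δ := by linarith
        _ ≤ δ₁ := by rw [hδdef]; have := min_le_left δ₁ r₀; linarith
    have hEB := heb y hyball
    have hEBr : infDist y S ≤ τ * max r 0 := by
      rw [← hycoe] at hEB
      have hmaxc : max ((r : ℝ) : EReal) 0 = ((max r 0 : ℝ) : EReal) := by
        rcases le_total r 0 with hr0 | hr0
        · rw [max_eq_right hr0, max_eq_right (show ((r:ℝ):EReal) ≤ 0 by exact_mod_cast hr0)]
          simp
        · rw [max_eq_left hr0, max_eq_left (show (0:EReal) ≤ ((r:ℝ):EReal) by exact_mod_cast hr0)]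
      rw [hmaxc, ← EReal.coe_mul] at hEB
      exact_mod_cast hEB
    have hinfy : infDist y S < τ * (t * (d + ε)) + t * ε := by
      set m := max r 0 with hm
      clear_value m
      have hmr : m ≤ t * (d + ε) := by
        rw [hm]
        exact max_le hrlt'.le (by nlinarith [ht, hdpos, hε])
      nlinarith [hEBr, ht, hτ, hmr]
    obtain ⟨s, hsS, hds⟩ := (infDist_lt_iff ⟨x, hxS⟩).1 hinfy
    -- bounds on s
    have hdyx : dist y x = t * ‖h'‖ := by
      rw [hy, dist_eq_norm, add_sub_cancel_left, norm_smul, Real.norm_eq_abs, abs_of_pos ht]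
    have hsx : dist s x < t * M := by
      calc dist s x ≤ dist s y + dist y x := dist_triangle _ _ _
        _ < (τ * (t * (d + ε)) + t * ε) + t * ‖h'‖ := by
            rw [dist_comm s y, hdyx]
            linarith [hds]
        _ ≤ t * (τ * (d + 1) + 1) + t * ‖h'‖ := by
            nlinarith [mul_nonneg (mul_nonneg ht.le hτ.le) (by linarith : (0:ℝ) ≤ 1 - ε),
              mul_nonneg ht.le (by linarith : (0:ℝ) ≤ 1 - ε)]
        _ < t * M := by rw [hM]; nlinarith
    have hsball₂ : s ∈ ball x δ₂ := by
      rw [mem_ball]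
      have : t * M < δ₂ := by
        have ht' : t < δ₂ / M := lt_of_lt_of_le htt₀ (by rw [ht₀def]; exact (min_le_right _ _).trans (min_le_right _ _))
        calc t * M < (δ₂ / M) * M := by nlinarith
          _ = δ₂ := by field_simp
      linarith [hsx]
    -- Shapiro applied
    have hxball₂ : x ∈ ball x δ₂ := mem_ball_self hδ₂
    have hShap := hsh s ⟨hsS, hsball₂⟩ x ⟨hxS, hxball₂⟩
    have hconene : (bouligand S x).Nonempty := ⟨0, zero_mem_bouligand hxS⟩
    have hsxnorm : ‖s - x‖ < t * M := by rw [← dist_eq_norm]; exact hsx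
    have hinfcone : infDist (s - x) (bouligand S x) < ε * (t * M) + t * ε := by
      calc infDist (s - x) (bouligand S x) ≤ ε * ‖s - x‖ := hShap
        _ ≤ ε * (t * M) := by nlinarith
        _ < ε * (t * M) + t * ε := by nlinarith
    obtain ⟨w, hw, hdw⟩ := (infDist_lt_iff hconene).1 hinfcone
    -- the point u
    refine ⟨(1 / t) • w, ?_, ?_⟩
    · exact bouligand_subset_deriv_nonpos hS hx0 (smul_mem_bouligand htinv hw)
    · have key1 : h' = (1 / t) • (y - x) := by
        rw [hy, add_sub_cancel_left, smul_smul, one_div_mul_cancel ht.ne', one_smul]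
      have hd2 : dist h' ((1 / t) • (s - x)) = (1 / t) * dist y s := by
        rw [key1, dist_smul₀, Real.norm_eq_abs, abs_of_pos htinv, dist_sub_right]
      have hd3 : dist ((1 / t) • (s - x)) ((1 / t) • w) = (1 / t) * dist (s - x) w := by
        rw [dist_smul₀, Real.norm_eq_abs, abs_of_pos htinv]
      calc dist h ((1 / t) • w)
          ≤ dist h h' + dist h' ((1 / t) • (s - x)) + dist ((1 / t) • (s - x)) ((1 / t) • w) :=
            dist_triangle4 _ _ _ _
        _ ≤ ε + (1 / t) * (τ * (t * (d + ε)) + t * ε) + (1 / t) * (ε * (t * M) + t * ε) := by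
            have e1 : dist h h' < ε := by rw [dist_comm]; exact hh'
            have e2 : (1 / t) * dist y s ≤ (1 / t) * (τ * (t * (d + ε)) + t * ε) :=
              mul_le_mul_of_nonneg_left hds.le htinv.le
            have e3 : (1 / t) * dist (s - x) w ≤ (1 / t) * (ε * (t * M) + t * ε) :=
              mul_le_mul_of_nonneg_left hdw.le htinv.le
            rw [hd2, hd3] at *
            linarith
        _ = ε + (τ * (d + ε) + ε) + (ε * M + ε) := by field_simp
        _ ≤ τ * d + ε * C := by rw [hC]; nlinarith
  -- conclude
  have key : EMetric.infEdist h S' ≤ ENNReal.ofReal (τ * d) := by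
    refine ENNReal.le_of_forall_pos_le_add fun η hη _ => ?_
    have hηpos : (0:ℝ) < (η : ℝ) := hη
    set ε := min 1 ((η : ℝ) / C) with hε
    have hεpos : 0 < ε := lt_min one_pos (by positivity)
    obtain ⟨u, huS', hdu⟩ := main ε hεpos (min_le_left _ _)
    have hεC : ε * C ≤ (η : ℝ) := by
      have : ε ≤ (η : ℝ) / C := min_le_right _ _
      calc ε * C ≤ ((η : ℝ) / C) * C := by nlinarith
        _ = (η : ℝ) := by field_simp
    calc EMetric.infEdist h S' ≤ edist h u := EMetric.infEdist_le_edist_of_mem huS'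
      _ = ENNReal.ofReal (dist h u) := edist_dist h u
      _ ≤ ENNReal.ofReal (τ * d + ε * C) := ENNReal.ofReal_le_ofReal hdu
      _ ≤ ENNReal.ofReal (τ * d) + ENNReal.ofReal (ε * C) := ENNReal.ofReal_add_le
      _ ≤ ENNReal.ofReal (τ * d) + (η : ℝ≥0∞) := by
          refine add_le_add le_rfl ?_
          calc ENNReal.ofReal (ε * C) ≤ ENNReal.ofReal (η : ℝ) := ENNReal.ofReal_le_ofReal hεC
            _ = (η : ℝ≥0∞) := ENNReal.ofReal_coe_nnreal
  calc ((EMetric.infEdist h S' : ℝ≥0∞) : EReal)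
      ≤ ((ENNReal.ofReal (τ * d) : ℝ≥0∞) : EReal) :=
        EReal.coe_ennreal_le_coe_ennreal_iff.2 key
    _ = max ((τ * d : ℝ) : EReal) 0 := EReal.coe_ennreal_ofReal
    _ = ((τ * d : ℝ) : EReal) := max_eq_left (by exact_mod_cast (by positivity : (0:ℝ) ≤ τ * d))
    _ = (τ : EReal) * max D 0 := by
        rw [max_eq_left hD0.le, ← hdcoe, ← EReal.coe_mul]
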